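/- Let k be a field of characteristic 0 and n ≥ 1. The vector space V of countable dimension equipped with the n-form ω = Σ_{i≥1} x_{i,1} ⊗ ⋯ ⊗ x_{i,n} is a universal n-space: every finite-dimensional vector space equipped with an n-linear form admits an embedding into (V, ω). -/

import Mathlib

/-- the countable-dimensional space `(ℕ × Fin n) →₀ k` equipped with the
`n`-form `ω = Σ_{i≥0} x_{i,1} ⊗ ⋯ ⊗ x_{i,n}` is a universal `n`-space: every
finite-dimensional space with an `n`-linear form embeds into it. -/
theorem stmt_1 (k : Type) [Field k] [CharZero k] (n : ℕ) (hn : 1 ≤ n)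
    (W : Type) [AddCommGroup W] [Module k W] [FiniteDimensional k W]
    (η : MultilinearMap k (fun _ : Fin n => W) k) :
    ∃ ι : W →ₗ[k] ((ℕ × Fin n) →₀ k),
      Function.Injective ι ∧
      ∀ w : Fin n → W, (∑ᶠ i : ℕ, ∏ j : Fin n, (ι (w j)) (i, j)) = η w := by
  classical
  set d := Module.finrank k W with hd
  let b : Module.Basis (Fin d) k W := Module.finBasis k W
  let j0 : Fin n := ⟨0, hn⟩
  let I := (Fin n → Fin d) ⊕ (Fin d × Bool)
  let e : I ≃ Fin (Fintype.card I) := Fintype.equivFin I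
  let enc : I → ℕ := fun i => (e i : ℕ)
  have henc : Function.Injective enc := fun a b h => e.injective (Fin.val_injective h)
  let f : I → Fin n → (W →ₗ[k] k) := fun i j =>
    match i with
    | Sum.inl t => if j = j0 then η (fun j' => b (t j')) • b.coord (t j) else b.coord (t j)
    | Sum.inr (a, s) => if s = false ∧ j = j0 then -(b.coord a) else b.coord a
  let F : W →ₗ[k] ((ℕ × Fin n) →₀ k) :=
    ∑ i : I, ∑ j : Fin n, (Finsupp.lsingle ((enc i, j) : ℕ × Fin n)).comp (f i j)
  have hF : ∀ (w : W) (m : ℕ) (j' : Fin n),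
      (F w) (m, j') = ∑ i : I, if enc i = m then f i j' w else 0 := by
    intro w m j'
    simp only [F, LinearMap.sum_apply, Finsupp.coe_finset_sum, Finset.sum_apply,
      LinearMap.comp_apply, Finsupp.lsingle_apply, Finsupp.single_apply,
      Prod.mk.injEq]
    refine Finset.sum_congr rfl fun i _ => ?_
    rw [Finset.sum_eq_single j']
    · by_cases h : enc i = m <;> simp [h]
    · intro j _ hj
      simp [hj]
    · simp
  have hFenc : ∀ (w : W) (i : I) (j : Fin n), (F w) (enc i, j) = f i j w := by
    intro w i j
    rw [hF]
    rw [Finset.sum_eq_single i]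
    · simp
    · intro i' _ hi'
      simp only [ite_eq_right_iff]
      intro h
      exact absurd (henc h) hi'
    · simp
  have hF0 : ∀ (w : W) (m : ℕ) (j : Fin n), m ∉ Set.range enc → (F w) (m, j) = 0 := by
    intro w m j hm
    rw [hF]
    apply Finset.sum_eq_zero
    intro i _
    rw [if_neg]
    exact fun h => hm ⟨i, h⟩
  refine ⟨F, ?_, ?_⟩
  · rw [← LinearMap.ker_eq_bot, LinearMap.ker_eq_bot']
    intro w hw
    have hcoord : ∀ a : Fin d, b.repr w a = 0 := by
      intro a
      have := hFenc w (Sum.inr (a, true)) j0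
      rw [hw] at this
      simp only [Finsupp.coe_zero, Pi.zero_apply] at this
      simpa [f, Module.Basis.coord_apply] using this.symm
    have : b.repr w = 0 := Finsupp.ext fun a => hcoord a
    simpa using congrArg b.repr.symm this
  · intro w
    have hsupp : (Function.support fun m => ∏ j : Fin n, (F (w j)) (m, j)) ⊆
        ↑(Finset.image enc Finset.univ) := by
      intro m hm
      simp only [Function.mem_support] at hm
      by_contra hmem
      apply hm
      apply Finset.prod_eq_zero (Finset.mem_univ j0)
      apply hF0
      intro ⟨i, hi⟩
      exact hmem (by simp [Finset.mem_coe, Finset.mem_image]; exact ⟨i, hi⟩)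
    rw [finsum_eq_finset_sum_of_support_subset _ hsupp,
      Finset.sum_image (fun a _ b _ h => henc h)]
    simp only [hFenc]
    rw [Fintype.sum_sum_type]
    have hinr : ∑ p : Fin d × Bool, ∏ j, (f (Sum.inr p) j) (w j) = 0 := by
      rw [Fintype.sum_prod_type]
      apply Finset.sum_eq_zero
      intro a _
      have hfac : ∀ j : Fin n, (f (Sum.inr (a, false)) j) (w j) =
          (if j = j0 then (-1 : k) else 1) * (f (Sum.inr (a, true)) j) (w j) := by
        intro j
        by_cases h : j = j0 <;> simp [f, h]
      rw [Fintype.sum_bool]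
      have : ∏ j, (f (Sum.inr (a, false)) j) (w j)
          = -∏ j, (f (Sum.inr (a, true)) j) (w j) := by
        calc ∏ j, (f (Sum.inr (a, false)) j) (w j)
            = ∏ j, ((if j = j0 then (-1 : k) else 1) * (f (Sum.inr (a, true)) j) (w j)) :=
              Finset.prod_congr rfl fun j _ => hfac j
          _ = (∏ j : Fin n, (if j = j0 then (-1 : k) else 1)) *
              ∏ j, (f (Sum.inr (a, true)) j) (w j) := Finset.prod_mul_distrib
          _ = -∏ j, (f (Sum.inr (a, true)) j) (w j) := by
              rw [Finset.prod_ite_eq' Finset.univ j0 (fun _ => (-1 : k))]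
              simp
      rw [this]
      ring
    rw [hinr, add_zero]
    have hfac2 : ∀ (t : Fin n → Fin d) (j : Fin n), (f (Sum.inl t) j) (w j) =
        (if j = j0 then η (fun j' => b (t j')) else 1) * b.repr (w j) (t j) := by
      intro t j
      by_cases h : j = j0 <;> simp [f, h, Module.Basis.coord_apply]
    have hinl : ∀ t : Fin n → Fin d, ∏ j, (f (Sum.inl t) j) (w j)
        = η (fun j' => b (t j')) * ∏ j, b.repr (w j) (t j) := by
      intro t
      calc ∏ j, (f (Sum.inl t) j) (w j)
          = ∏ j, ((if j = j0 then η (fun j' => b (t j')) else 1) * b.repr (w j) (t j)) :=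
            Finset.prod_congr rfl fun j _ => hfac2 t j
        _ = (∏ j : Fin n, (if j = j0 then η (fun j' => b (t j')) else 1)) *
            ∏ j, b.repr (w j) (t j) := Finset.prod_mul_distrib
        _ = η (fun j' => b (t j')) * ∏ j, b.repr (w j) (t j) := by
            rw [Finset.prod_ite_eq' Finset.univ j0 (fun _ => η (fun j' => b (t j')))]
            simp
    simp only [hinl]
    have hw : w = fun j => ∑ a : Fin d, b.repr (w j) a • b a :=
      funext fun j => (b.sum_repr (w j)).symm
    conv_rhs => rw [hw, η.map_sum]
    refine Finset.sum_congr rfl fun t _ => ?_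
    rw [η.map_smul_univ]
    simp [mul_comm]
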